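/- Let F : ℝ^n → ℝ be differentiable with (H_F, ν)-Hölder continuous gradient on a closed convex set X, ν ∈ (0,1], and let ε > 0, γ = (1/H_F)·ε^{(1−ν)/(1+ν)}. Fix x ∈ X and let x⁺ = argmin_{u ∈ X} ⟨∇F(x), u − x⟩ + (1/(2γ))‖u − x‖². Then (1/(2γ))‖x⁺ − x‖² ≤ F(x) − F(x⁺) + (H_F/2)ε. -/

import Mathlib

open scoped RealInnerProductSpace

set_option maxHeartbeats 1000000 in
/-- Descent-type inequality for the projected-gradient step under `(H_F, ν)`-Hölder smoothness:
with `γ = (1/H_F) ε^{(1-ν)/(1+ν)}` and `x⁺` the minimizer over `X` of the proximal model at `x`,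
`(1/(2γ))‖x⁺ - x‖² ≤ F(x) - F(x⁺) + (H_F/2) ε`. -/
theorem stmt_12 (n : ℕ) (X : Set (EuclideanSpace ℝ (Fin n)))
    (hXc : Convex ℝ X) (hXcl : IsClosed X)
    (F : EuclideanSpace ℝ (Fin n) → ℝ) (g : EuclideanSpace ℝ (Fin n) → EuclideanSpace ℝ (Fin n))
    (HF ν ε : ℝ) (hHF : 0 < HF) (hν : ν ∈ Set.Ioc (0 : ℝ) 1) (hε : 0 < ε)
    (hgrad : ∀ x ∈ X, HasGradientAt F (g x) x)
    (hhold : ∀ x ∈ X, ∀ x' ∈ X, ‖g x' - g x‖ ≤ HF * ‖x' - x‖ ^ ν)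
    (γ : ℝ) (hγ : γ = (1 / HF) * ε ^ ((1 - ν) / (1 + ν)))
    (x xp : EuclideanSpace ℝ (Fin n)) (hx : x ∈ X) (hxp : xp ∈ X)
    (hmin : ∀ u ∈ X,
      ⟪g x, xp - x⟫ + (1 / (2 * γ)) * ‖xp - x‖ ^ 2 ≤
        ⟪g x, u - x⟫ + (1 / (2 * γ)) * ‖u - x‖ ^ 2) :
    (1 / (2 * γ)) * ‖xp - x‖ ^ 2 ≤ F x - F xp + (HF / 2) * ε := by
  obtain ⟨hν0, hν1⟩ := hν
  have h1ν : (0:ℝ) < 1 + ν := by linarith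
  have hE : (0:ℝ) < ε ^ ((1 - ν) / (1 + ν)) := Real.rpow_pos_of_pos hε _
  have hγ0 : 0 < γ := by rw [hγ]; positivity
  set v := xp - x with hv
  set r := ‖v‖ with hr
  have hr0 : 0 ≤ r := norm_nonneg _
  by_cases hrz : r = 0
  · have h0 : (1 / (2 * γ)) * r ^ 2 = 0 := by rw [hrz]; ring
    rw [h0]
    have hxx : xp = x := by
      have hv0 : v = 0 := norm_eq_zero.mp hrz
      have := sub_eq_zero.mp (hv ▸ hv0 : xp - x = 0)
      exact this
    rw [hxx]
    have : (0:ℝ) ≤ (HF/2)*ε := by positivity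
    linarith
  have hrpos : 0 < r := lt_of_le_of_ne hr0 (Ne.symm hrz)
  have hmem : ∀ t ∈ Set.Icc (0:ℝ) 1, x + t • v ∈ X := by
    intro t ht
    have h := hXc hx hxp (by linarith [ht.2] : (0:ℝ) ≤ 1 - t) ht.1 (by ring)
    convert h using 1
    simp only [hv]
    module
  set A := ⟪g x, v⟫ with hA
  -- Step 1: variational inequality
  have hvar : A + (1/γ) * r ^ 2 ≤ 0 := by
    by_contra hcon
    push_neg at hcon
    set δ := A + (1/γ) * r ^ 2 with hδ
    have hδ0 : 0 < δ := hcon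
    set s : ℝ := min 1 (γ*δ/r^2) with hs
    have hs0 : 0 < s := lt_min one_pos (by positivity)
    have hs1 : s ≤ 1 := min_le_left _ _
    have hs2 : s * r^2 ≤ γ*δ := by
      have hle : s ≤ γ*δ/r^2 := min_le_right _ _
      calc s * r^2 ≤ (γ*δ/r^2) * r^2 := by nlinarith [sq_nonneg r]
        _ = γ*δ := by field_simp
    have hu : x + (1-s) • v ∈ X := hmem (1-s) ⟨by linarith, by linarith⟩
    have h1 := hmin _ hu
    rw [show x + (1-s) • v - x = (1-s) • v by abel] at h1
    rw [real_inner_smul_right, norm_smul, Real.norm_eq_abs,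
      abs_of_nonneg (by linarith : (0:ℝ) ≤ 1 - s)] at h1
    simp only [← hr, ← hA, ← hv] at h1
    have h2 : s * A ≤ (1/(2*γ)) * (s^2 - 2*s) * r^2 := by nlinarith [h1]
    have h3 : A ≤ (1/(2*γ)) * (s - 2) * r^2 := by
      have hmul := mul_le_mul_of_nonneg_left h2 (le_of_lt (inv_pos.mpr hs0))
      rw [← mul_assoc, inv_mul_cancel₀ (ne_of_gt hs0), one_mul] at hmul
      calc A ≤ s⁻¹ * ((1/(2*γ)) * (s^2 - 2*s) * r^2) := hmul
        _ = (1/(2*γ)) * (s - 2) * r^2 := by field_simp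
    have h4 : δ ≤ s * r^2 / (2*γ) := by
      have heq2 : (1/(2*γ)) * (s - 2) * r^2 = -(1/γ)*r^2 + s*r^2/(2*γ) := by
        field_simp; ring
      rw [hδ]
      linarith [h3.trans_eq heq2]
    have h5 : s*r^2/(2*γ) ≤ δ/2 := by
      rw [div_le_div_iff₀ (by positivity) (by norm_num)]
      nlinarith
    have hcontr := h4.trans h5
    clear_value s δ
    linarith
  -- Step 2: descent lemma
  have hdesc : F xp ≤ F x + A + (HF/(1+ν)) * r ^ (1+ν) := by
    set ψ : ℝ → ℝ := fun t => F (x + t • v) - t * A - (HF/(1+ν)) * r ^ (1+ν) * t ^ (1+ν) with hψ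
    have hder : ∀ t ∈ Set.Icc (0:ℝ) 1, HasDerivAt ψ
        (⟪g (x + t • v), v⟫ - A - HF * r ^ (1+ν) * t ^ ν) t := by
      intro t ht
      have hF' : HasDerivAt (fun s : ℝ => F (x + s • v)) ⟪g (x + t • v), v⟫ t := by
        have hline : HasDerivAt (fun s : ℝ => x + s • v) v t := by
          simpa using ((hasDerivAt_id t).smul_const v).const_add x
        have hg := (hgrad _ (hmem t ht)).hasFDerivAt
        have hcomp := hg.comp_hasDerivAt t hline
        simpa [Function.comp_def] using hcomp
      have hpow : HasDerivAt (fun s : ℝ => s ^ (1+ν)) ((1+ν) * t ^ ν) t := by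
        have := Real.hasDerivAt_rpow_const (x := t) (p := 1+ν) (Or.inr (by linarith))
        simpa using this
      have h2 : HasDerivAt (fun s : ℝ => s * A) A t := by
        simpa using (hasDerivAt_id t).mul_const A
      have h3 : HasDerivAt (fun s : ℝ => (HF/(1+ν)) * r ^ (1+ν) * s ^ (1+ν))
          ((HF/(1+ν)) * r ^ (1+ν) * ((1+ν) * t ^ ν)) t := hpow.const_mul _
      have hfin := (hF'.sub h2).sub h3
      have heq : ⟪g (x + t • v), v⟫ - A - (HF/(1+ν)) * r ^ (1+ν) * ((1+ν) * t ^ ν)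
          = ⟪g (x + t • v), v⟫ - A - HF * r ^ (1+ν) * t ^ ν := by
        field_simp
      rw [heq] at hfin
      exact hfin
    have hanti : AntitoneOn ψ (Set.Icc 0 1) := by
      apply antitoneOn_of_deriv_nonpos (convex_Icc 0 1)
      · intro t ht
        exact (hder t ht).continuousAt.continuousWithinAt
      · intro t ht
        rw [interior_Icc] at ht
        exact ((hder t (Set.mem_Icc_of_Ioo ht)).differentiableAt).differentiableWithinAt
      · intro t ht
        rw [interior_Icc] at ht
        rw [(hder t (Set.mem_Icc_of_Ioo ht)).deriv]
        have hinner : ⟪g (x + t • v), v⟫ - A ≤ HF * r ^ (1+ν) * t ^ ν := by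
          have h1 : ⟪g (x + t • v), v⟫ - A = ⟪g (x + t • v) - g x, v⟫ := by
            rw [inner_sub_left]
          rw [h1]
          calc ⟪g (x + t • v) - g x, v⟫ ≤ ‖g (x + t • v) - g x‖ * ‖v‖ := real_inner_le_norm _ _
            _ ≤ (HF * ‖x + t • v - x‖ ^ ν) * ‖v‖ := by
                apply mul_le_mul_of_nonneg_right _ (norm_nonneg _)
                exact hhold x hx _ (hmem t (Set.mem_Icc_of_Ioo ht))
            _ = HF * r ^ (1+ν) * t ^ ν := by
                rw [show x + t • v - x = t • v by abel, norm_smul, Real.norm_eq_abs,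
                  abs_of_nonneg ht.1.le, Real.mul_rpow ht.1.le (norm_nonneg v), ← hr,
                  show (1:ℝ)+ν = ν+1 by ring, Real.rpow_add_one' hr0 (by linarith)]
                ring
        linarith
    have h01 := hanti (Set.left_mem_Icc.mpr one_pos.le) (Set.right_mem_Icc.mpr one_pos.le)
      one_pos.le
    simp only [hψ] at h01
    rw [zero_smul, add_zero, Real.zero_rpow (by linarith : (1:ℝ)+ν ≠ 0), Real.one_rpow,
      one_smul] at h01
    have hxv : x + v = xp := by simp [hv]
    rw [hxv] at h01
    nlinarith [h01]
  -- Step 3: Young inequality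
  have hyoung : (HF/(1+ν)) * r ^ (1+ν) ≤ (1/(2*γ)) * r ^ 2 + (HF/2) * ε := by
    set α := (1-ν)/(1+ν) with hα
    have hα0 : 0 ≤ α := by apply div_nonneg <;> linarith
    set E := ε ^ α with hEdef
    have hE0 : 0 < E := Real.rpow_pos_of_pos hε _
    have hHF' : HF ≠ 0 := ne_of_gt hHF
    have hE' : E ≠ 0 := ne_of_gt hE0
    have hinv : 1/(2*γ) = HF/(2*E) := by
      rw [hγ]; field_simp
    set θ := (1+ν)/2 with hθ
    set w := (1-ν)/2 with hw
    have hgm := Real.geom_mean_le_arith_mean2_weighted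
      (w₁ := θ) (w₂ := w) (p₁ := E⁻¹ * r^2) (p₂ := ε)
      (by rw [hθ]; linarith) (by rw [hw]; linarith)
      (by positivity) hε.le (by rw [hθ, hw]; ring)
    have hkey : (E⁻¹ * r^2) ^ θ * ε ^ w = r ^ (1+ν) := by
      rw [Real.mul_rpow (by positivity) (by positivity)]
      rw [← Real.rpow_natCast r 2, ← Real.rpow_mul hr0]
      have h2θ : ((2:ℕ):ℝ) * θ = 1 + ν := by rw [hθ]; push_cast; ring
      rw [h2θ]
      have hEinv : E⁻¹ ^ θ = ε ^ (-(α*θ)) := by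
        rw [hEdef, ← Real.rpow_neg hε.le, ← Real.rpow_mul hε.le, neg_mul]
      rw [hEinv]
      have hcomm : ε ^ (-(α*θ)) * r^(1+ν) * ε^w = r^(1+ν) * (ε^(-(α*θ)) * ε^w) := by ring
      rw [hcomm, ← Real.rpow_add hε]
      have hz : -(α*θ) + w = 0 := by
        rw [hα, hθ, hw]
        field_simp; ring
      rw [hz, Real.rpow_zero, mul_one]
    rw [hkey] at hgm
    have hc : (HF/(1+ν)) * r ^ (1+ν) ≤
        (HF/(1+ν)) * (θ * (E⁻¹*r^2)) + (HF/(1+ν)) * (w * ε) := by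
      have := mul_le_mul_of_nonneg_left hgm (by positivity : (0:ℝ) ≤ HF/(1+ν))
      linarith [this, mul_add (HF/(1+ν)) (θ * (E⁻¹*r^2)) (w * ε)]
    have hc1 : (HF/(1+ν)) * (θ * (E⁻¹*r^2)) = (1/(2*γ)) * r^2 := by
      rw [hinv, hθ]
      field_simp
    have hc2 : (HF/(1+ν)) * (w * ε) ≤ (HF/2) * ε := by
      have heq3 : (HF/(1+ν)) * (w * ε) = (HF*ε) * ((1-ν)/(2*(1+ν))) := by
        rw [hw]; field_simp
      have hfrac : (1-ν)/(2*(1+ν)) ≤ 1/2 := by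
        rw [div_le_div_iff₀ (by linarith) (by norm_num)]
        nlinarith
      have := mul_le_mul_of_nonneg_left hfrac (by positivity : (0:ℝ) ≤ HF*ε)
      rw [heq3]
      linarith [this]
    linarith
  linarith [hdesc, hvar, hyoung,
    show (1/γ)*r^2 = 2 * ((1/(2*γ))*r^2) by field_simp]
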